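/- Let G(z) = Σ_{i∈I'} p_i/(z - λ_i) where I' is finite, the λ_i are distinct reals, and p_i > 0 with Σ p_i = 1. Then the zeros of G are all real, and G has exactly one zero strictly between each pair of consecutive poles λ_i (when the λ_i are arranged in increasing order) and no other zeros; consequently G admits the factorization G(z) = (1/z) Π_{j∈J}(1 - μ_j/z) Π_{i∈I'}(1 - λ_i/z)^{-1} where {μ_j}_{j∈J} is the set of zeros of G, for all z ∈ ℂ ∖ ({0} ∪ {λ_i}). -/

import Mathlib

open Polynomial Finset

noncomputable def cauchyP (k : ℕ) (lam p : Fin (k+1) → ℝ) : Polynomial ℝ :=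
  ∑ i, C (p i) * ∏ i' ∈ univ.erase i, (X - C (lam i'))

lemma cauchyP_prod_monic (k : ℕ) (lam : Fin (k+1) → ℝ) (i : Fin (k+1)) :
    (∏ i' ∈ univ.erase i, (X - C (lam i') : Polynomial ℝ)).Monic :=
  monic_prod_of_monic _ _ fun _ _ => monic_X_sub_C _

lemma cauchyP_prod_natDegree (k : ℕ) (lam : Fin (k+1) → ℝ) (i : Fin (k+1)) :
    (∏ i' ∈ univ.erase i, (X - C (lam i') : Polynomial ℝ)).natDegree = k := by
  rw [natDegree_prod _ _ (fun i' _ => X_sub_C_ne_zero (lam i'))]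
  simp [natDegree_X_sub_C, card_erase_of_mem]

lemma cauchyP_natDegree_le (k : ℕ) (lam p : Fin (k+1) → ℝ) :
    (cauchyP k lam p).natDegree ≤ k := by
  refine natDegree_sum_le_of_forall_le _ _ fun i _ => ?_
  refine (natDegree_mul_le).trans ?_
  simp [natDegree_C, cauchyP_prod_natDegree k lam i]

lemma cauchyP_coeff (k : ℕ) (lam p : Fin (k+1) → ℝ) (hsum : ∑ i, p i = 1) :
    (cauchyP k lam p).coeff k = 1 := by
  rw [cauchyP, finset_sum_coeff]
  have : ∀ i : Fin (k+1), (C (p i) * ∏ i' ∈ univ.erase i, (X - C (lam i') : Polynomial ℝ)).coeff k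
      = p i := by
    intro i
    rw [coeff_C_mul]
    have h1 := (cauchyP_prod_monic k lam i).coeff_natDegree
    rw [cauchyP_prod_natDegree k lam i] at h1
    rw [h1, mul_one]
  simp_rw [this]
  exact hsum

lemma cauchyP_monic (k : ℕ) (lam p : Fin (k+1) → ℝ) (hsum : ∑ i, p i = 1) :
    (cauchyP k lam p).Monic :=
  monic_of_natDegree_le_of_coeff_eq_one k (cauchyP_natDegree_le k lam p)
    (cauchyP_coeff k lam p hsum)

lemma cauchyP_natDegree (k : ℕ) (lam p : Fin (k+1) → ℝ) (hsum : ∑ i, p i = 1) :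
    (cauchyP k lam p).natDegree = k :=
  le_antisymm (cauchyP_natDegree_le k lam p)
    (le_natDegree_of_ne_zero (by rw [cauchyP_coeff k lam p hsum]; exact one_ne_zero))

lemma cauchyP_eval_pole (k : ℕ) (lam p : Fin (k+1) → ℝ) (i : Fin (k+1)) :
    (cauchyP k lam p).eval (lam i) = p i * ∏ i' ∈ univ.erase i, (lam i - lam i') := by
  rw [cauchyP, eval_finset_sum]
  rw [Finset.sum_eq_single i]
  · simp [eval_prod]
  · intro i'' _ hne
    have hmem : i ∈ univ.erase i'' := Finset.mem_erase.2 ⟨(Ne.symm hne), mem_univ i⟩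
    simp only [eval_mul, eval_C, eval_prod, eval_sub, eval_X]
    rw [Finset.prod_eq_zero hmem (by ring), mul_zero]
  · simp

section
variable (k : ℕ) (lam : Fin (k+1) → ℝ)

lemma sign_aux (hlam : StrictMono lam) (i : Fin (k+1)) :
    0 < (-1:ℝ) ^ (univ.filter (fun i' => i < i')).card
      * ∏ i' ∈ univ.erase i, (lam i - lam i') := by
  have hsplit : univ.erase i = (univ.filter (fun i' => i' < i)) ∪ (univ.filter (fun i' => i < i')) := by
    ext a
    simp [Finset.mem_union, ← lt_or_lt_iff_ne, ne_comm]
  have hdisj : Disjoint (univ.filter (fun i' => i' < i)) (univ.filter (fun i' => i < i')) := by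
    rw [Finset.disjoint_left]
    intro a ha hb
    simp only [Finset.mem_filter] at ha hb
    exact absurd (hb.2.trans ha.2) (lt_irrefl i)
  rw [hsplit, Finset.prod_union hdisj]
  set t := univ.filter (fun i' : Fin (k+1) => i < i') with ht
  have h2 : ∏ a ∈ t, (lam i - lam a) = (-1:ℝ) ^ t.card * ∏ a ∈ t, (lam a - lam i) := by
    rw [← Finset.prod_const, ← Finset.prod_mul_distrib]
    exact Finset.prod_congr rfl fun a _ => by ring
  rw [h2]
  have hA : 0 < ∏ a ∈ univ.filter (fun i' => i' < i), (lam i - lam a) :=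
    Finset.prod_pos fun a ha => sub_pos.2 (hlam (Finset.mem_filter.1 ha).2)
  have hB : 0 < ∏ a ∈ t, (lam a - lam i) :=
    Finset.prod_pos fun a ha => sub_pos.2 (hlam (Finset.mem_filter.1 ha).2)
  have hsq : (-1:ℝ) ^ t.card * (-1:ℝ) ^ t.card = 1 := by
    rw [← mul_pow]; norm_num
  calc (0:ℝ) < ((-1:ℝ) ^ t.card * (-1:ℝ) ^ t.card) *
      ((∏ a ∈ univ.filter (fun i' => i' < i), (lam i - lam a)) * ∏ a ∈ t, (lam a - lam i)) := by
        rw [hsq, one_mul]; exact mul_pos hA hB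
    _ = (-1:ℝ) ^ t.card * ((∏ a ∈ univ.filter (fun i' => i' < i), (lam i - lam a)) *
        ((-1:ℝ) ^ t.card * ∏ a ∈ t, (lam a - lam i))) := by ring

lemma card_filter_succ (j : Fin k) :
    (univ.filter (fun i' => j.castSucc < i')).card
      = (univ.filter (fun i' => j.succ < i')).card + 1 := by
  have h : univ.filter (fun i' : Fin (k+1) => j.castSucc < i')
      = insert j.succ (univ.filter (fun i' => j.succ < i')) := by
    ext a
    simp only [Finset.mem_filter, Finset.mem_insert, mem_univ, true_and]
    rw [Fin.castSucc_lt_iff_succ_le, le_iff_lt_or_eq, eq_comm, or_comm]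
  rw [h, Finset.card_insert_of_notMem (by simp)]

lemma sign_flip (hlam : StrictMono lam) (j : Fin k) :
    (∏ i' ∈ univ.erase j.castSucc, (lam j.castSucc - lam i'))
      * (∏ i' ∈ univ.erase j.succ, (lam j.succ - lam i')) < 0 := by
  have h1 := sign_aux k lam hlam j.castSucc
  have h2 := sign_aux k lam hlam j.succ
  rw [card_filter_succ k j, pow_succ] at h1
  rcases Nat.even_or_odd (univ.filter (fun i' => j.succ < i')).card with he | ho
  · rw [he.neg_one_pow] at h1 h2
    rw [one_mul] at h2
    nlinarith
  · rw [ho.neg_one_pow] at h1 h2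
    nlinarith
end


/-- Zeros of the Cauchy transform `G(z) = Σᵢ pᵢ/(z - λᵢ)` of a finitely supported
probability measure with distinct real atoms `λ₀ < λ₁ < … < λ_k` and positive
weights `pᵢ` summing to `1`: there are real numbers `μ_j`, one strictly between each
pair of consecutive poles, such that each `μ_j` is the unique zero of `G` in its gap,
`G` has no other zeros, and `G` factors as
`G(z) = (1/z) Π_j (1 - μ_j/z) Π_i (1 - λ_i/z)⁻¹` on `ℂ ∖ ({0} ∪ {λᵢ})`. -/
theorem cauchy_transform_zeros_and_factorization
    (k : ℕ) (lam : Fin (k + 1) → ℝ) (hlam : StrictMono lam)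
    (p : Fin (k + 1) → ℝ) (hp : ∀ i, 0 < p i) (hsum : ∑ i, p i = 1)
    (G : ℂ → ℂ) (hG : G = fun z => ∑ i, (p i : ℂ) / (z - (lam i : ℂ))) :
    ∃ μ : Fin k → ℝ,
      -- one zero strictly between each pair of consecutive poles
      (∀ j : Fin k, lam j.castSucc < μ j ∧ μ j < lam j.succ ∧ G (μ j) = 0) ∧
      -- uniqueness of the zero in each gap
      (∀ j : Fin k, ∀ x : ℝ, lam j.castSucc < x → x < lam j.succ →
        G (x : ℂ) = 0 → x = μ j) ∧
      -- all zeros of `G` are real and there are no zeros other than the `μ_j`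
      (∀ z : ℂ, (∀ i, z ≠ (lam i : ℂ)) → G z = 0 → ∃ j : Fin k, z = (μ j : ℂ)) ∧
      -- the factorization
      (∀ z : ℂ, z ≠ 0 → (∀ i, z ≠ (lam i : ℂ)) →
        G z = (1 / z) * (∏ j : Fin k, (1 - (μ j : ℂ) / z))
          * (∏ i : Fin (k + 1), (1 - (lam i : ℂ) / z))⁻¹) := by
  set P := cauchyP k lam p with hPdef
  have hsign : ∀ j : Fin k, P.eval (lam j.castSucc) * P.eval (lam j.succ) < 0 := by
    intro j
    rw [hPdef, cauchyP_eval_pole, cauchyP_eval_pole]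
    have h := sign_flip k lam hlam j
    nlinarith [hp j.castSucc, hp j.succ, mul_pos (hp j.castSucc) (hp j.succ)]
  have hex : ∀ j : Fin k, ∃ x, lam j.castSucc < x ∧ x < lam j.succ ∧ P.eval x = 0 := by
    intro j
    have hab : lam j.castSucc ≤ lam j.succ := (hlam (Fin.castSucc_lt_succ : j.castSucc < j.succ)).le
    have hcont : ContinuousOn (fun x => P.eval x) (Set.Icc (lam j.castSucc) (lam j.succ)) :=
      (Polynomial.continuous (p := P)).continuousOn
    rcases mul_neg_iff.1 (hsign j) with ⟨h1, h2⟩ | ⟨h1, h2⟩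
    · have h0 : (0:ℝ) ∈ Set.Ioo (P.eval (lam j.succ)) (P.eval (lam j.castSucc)) := ⟨h2, h1⟩
      obtain ⟨x, hx, hfx⟩ := intermediate_value_Ioo' hab hcont h0
      exact ⟨x, hx.1, hx.2, hfx⟩
    · have h0 : (0:ℝ) ∈ Set.Ioo (P.eval (lam j.castSucc)) (P.eval (lam j.succ)) := ⟨h1, h2⟩
      obtain ⟨x, hx, hfx⟩ := intermediate_value_Ioo hab hcont h0
      exact ⟨x, hx.1, hx.2, hfx⟩
  choose μ hμ1 hμ2 hμ3 using hex
  have hgap_ne : ∀ (j : Fin k) (x : ℝ), lam j.castSucc < x → x < lam j.succ →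
      ∀ i, x ≠ lam i := by
    intro j x h1 h2 i
    rcases le_or_gt i j.castSucc with hi | hi
    · exact ((hlam.monotone hi).trans_lt h1).ne'
    · exact (h2.trans_le (hlam.monotone (Fin.castSucc_lt_iff_succ_le.1 hi))).ne
  have hgap_sep : ∀ (j j' : Fin k) (x : ℝ), lam j.castSucc < x → x < lam j.succ →
      lam j'.castSucc < x → x < lam j'.succ → j = j' := by
    intro j j' x h1 h2 h1' h2'
    rcases lt_trichotomy j j' with h | h | h
    · have := hlam.monotone (Fin.succ_le_castSucc_iff.2 h)
      linarith
    · exact h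
    · have := hlam.monotone (Fin.succ_le_castSucc_iff.2 h)
      linarith
  have hμinj : Function.Injective μ := by
    intro j j' h
    exact hgap_sep j j' (μ j') (by rw [← h]; exact hμ1 j) (by rw [← h]; exact hμ2 j)
      (hμ1 j') (hμ2 j')
  have hPne : P ≠ 0 := (cauchyP_monic k lam p hsum).ne_zero
  set m : Multiset ℝ := (Finset.univ.image μ).val with hm
  have hmcard : Multiset.card m = k := by
    rw [hm, ← Finset.card_def, Finset.card_image_of_injective _ hμinj, Finset.card_univ,
      Fintype.card_fin]
  have hmle : m ≤ P.roots := by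
    refine Multiset.le_iff_count.2 fun a => ?_
    by_cases ha : a ∈ m
    · have h1 : Multiset.count a m = 1 :=
        Multiset.count_eq_one_of_mem (Finset.univ.image μ).nodup ha
      rw [h1]
      refine Multiset.one_le_count_iff_mem.2 ?_
      rw [Polynomial.mem_roots hPne]
      obtain ⟨j, _, rfl⟩ := Finset.mem_image.1 (Finset.mem_val.mp (show a ∈ (Finset.univ.image μ).val from ha))
      exact hμ3 j
    · rw [Multiset.count_eq_zero_of_notMem ha]
      exact Nat.zero_le _
  have hcard : Multiset.card P.roots = k := le_antisymm
    ((Polynomial.card_roots' P).trans_eq (cauchyP_natDegree k lam p hsum))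
    (hmcard ▸ Multiset.card_le_card hmle)
  have hroots : P.roots = m := (Multiset.eq_of_le_of_card_le hmle (by rw [hcard, hmcard])).symm
  have hsplits : P.Splits :=
    (Polynomial.splits_iff_card_roots).2 (by rw [hcard, cauchyP_natDegree k lam p hsum])
  have hPfact : P = ∏ j : Fin k, (X - C (μ j)) := by
    have h1 := Polynomial.Splits.eq_prod_roots_of_monic (f := cauchyP k lam p) hsplits (cauchyP_monic k lam p hsum)
    rw [← hPdef] at h1
    rw [hroots, hm] at h1
    rw [h1]
    rw [show ((Finset.univ.image μ).val.map fun a => X - C a).prod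
        = ∏ a ∈ Finset.univ.image μ, (X - C a) from rfl,
      Finset.prod_image (fun j _ j' _ h => hμinj h)]
  have hA : ∀ z : ℂ, (∑ i, (p i : ℂ) * ∏ i' ∈ univ.erase i, (z - (lam i' : ℂ)))
      = ∏ j : Fin k, (z - (μ j : ℂ)) := by
    intro z
    have h1 := congrArg (fun q : Polynomial ℝ => Polynomial.aeval z q) hPfact
    simp only [hPdef, cauchyP, map_sum, map_mul, map_prod, map_sub, Polynomial.aeval_X,
      Polynomial.aeval_C, Complex.coe_algebraMap] at h1
    exact h1
  have hQne : ∀ z : ℂ, (∀ i, z ≠ (lam i : ℂ)) → (∏ i, (z - (lam i : ℂ))) ≠ 0 := by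
    intro z hz
    exact Finset.prod_ne_zero_iff.2 fun i _ => sub_ne_zero.2 (hz i)
  have hB : ∀ z : ℂ, (∀ i, z ≠ (lam i : ℂ)) →
      G z * ∏ i, (z - (lam i : ℂ))
        = ∑ i, (p i : ℂ) * ∏ i' ∈ univ.erase i, (z - (lam i' : ℂ)) := by
    intro z hz
    rw [hG]
    simp only
    rw [Finset.sum_mul]
    refine Finset.sum_congr rfl fun i _ => ?_
    rw [← Finset.mul_prod_erase univ _ (mem_univ i)]
    have hne : z - (lam i : ℂ) ≠ 0 := sub_ne_zero.2 (hz i)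
    field_simp
  have hGform : ∀ z : ℂ, (∀ i, z ≠ (lam i : ℂ)) →
      G z = (∏ j : Fin k, (z - (μ j : ℂ))) / ∏ i, (z - (lam i : ℂ)) := by
    intro z hz
    rw [eq_div_iff (hQne z hz), hB z hz, hA z]
  refine ⟨μ, fun j => ⟨hμ1 j, hμ2 j, ?_⟩, ?_, ?_, ?_⟩
  · have hz : ∀ i, ((μ j : ℝ) : ℂ) ≠ (lam i : ℂ) := fun i h =>
      hgap_ne j (μ j) (hμ1 j) (hμ2 j) i (by exact_mod_cast h)
    rw [hGform _ hz, Finset.prod_eq_zero (mem_univ j) (by simp), zero_div]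
  · intro j x h1 h2 hx0
    have hz : ∀ i, ((x : ℝ) : ℂ) ≠ (lam i : ℂ) := fun i h =>
      hgap_ne j x h1 h2 i (by exact_mod_cast h)
    have hform := hGform _ hz
    rw [hx0] at hform
    have hnum : (∏ j' : Fin k, ((x:ℂ) - (μ j' : ℂ))) = 0 :=
      (div_eq_zero_iff.1 hform.symm).resolve_right (hQne _ hz)
    obtain ⟨j', _, hj'⟩ := Finset.prod_eq_zero_iff.1 hnum
    have hxj' : x = μ j' := by exact_mod_cast sub_eq_zero.1 hj'
    have hjj : j = j' := hgap_sep j j' x h1 h2 (by rw [hxj']; exact hμ1 j')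
      (by rw [hxj']; exact hμ2 j')
    rw [hjj]
    exact hxj'
  · intro z hz hz0
    have hform := hGform z hz
    rw [hz0] at hform
    have hnum : (∏ j' : Fin k, (z - (μ j' : ℂ))) = 0 :=
      (div_eq_zero_iff.1 hform.symm).resolve_right (hQne z hz)
    obtain ⟨j', _, hj'⟩ := Finset.prod_eq_zero_iff.1 hnum
    exact ⟨j', sub_eq_zero.1 hj'⟩
  · intro z hz0 hz
    rw [hGform z hz]
    have h1 : ∀ j : Fin k, (1 - (μ j : ℂ)/z) = (z - (μ j : ℂ))/z := fun j => one_sub_div hz0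
    have h2 : ∀ i : Fin (k+1), (1 - (lam i : ℂ)/z) = (z - (lam i : ℂ))/z := fun i =>
      one_sub_div hz0
    rw [Finset.prod_congr rfl fun j _ => h1 j, Finset.prod_congr rfl fun i _ => h2 i,
      Finset.prod_div_distrib, Finset.prod_div_distrib, Finset.prod_const, Finset.prod_const]
    simp only [Finset.card_univ, Fintype.card_fin]
    have hQ := hQne z hz
    field_simp
    ring
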